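/- In the matching-pennies game with optimizer utility matrix A = [[1, −1], [−1, 1]], for every η > 0 and every even T ∈ ℕ, the optimal discrete-time reward against an MWU learner with step η exceeds the optimal continuous-time reward against the Replicator Dynamics with the same η by at least (T/2)·tanh(η): R*_disc(0, T) ≥ R*_cont(0, T) + (T/2)·tanh(η). -/

import Mathlib

open MeasureTheory
open intervalIntegral

/-- Componentwise cumulative play of a continuous-time strategy: `∫_0^t x(s) ds`. -/
noncomputable def cumX {n : ℕ} (x : ℝ → Fin n → ℝ) (t : ℝ) (k : Fin n) : ℝ :=
  ∫ s in (0:ℝ)..t, x s k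

/-- The Replicator Dynamics learner's mixed strategy at time `t`. -/
noncomputable def contPlay {n m : ℕ} (η : ℝ) (A : Matrix (Fin n) (Fin m) ℝ)
    (h0 : Fin m → ℝ) (x : ℝ → Fin n → ℝ) (t : ℝ) (i : Fin m) : ℝ :=
  Real.exp (η * (h0 i - ∑ k, cumX x t k * A k i)) /
    ∑ j, Real.exp (η * (h0 j - ∑ k, cumX x t k * A k j))

/-- The optimizer's continuous-time reward against the Replicator Dynamics. -/
noncomputable def Rcont {n m : ℕ} (η : ℝ) (A : Matrix (Fin n) (Fin m) ℝ)
    (h0 : Fin m → ℝ) (T : ℝ) (x : ℝ → Fin n → ℝ) : ℝ :=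
  ∫ t in (0:ℝ)..T, ∑ k, ∑ i, x t k * A k i * contPlay η A h0 x t i

/-- The optimal continuous-time reward. -/
noncomputable def RcontStar {n m : ℕ} (η : ℝ) (A : Matrix (Fin n) (Fin m) ℝ)
    (h0 : Fin m → ℝ) (T : ℝ) : ℝ :=
  sSup {r | ∃ x : ℝ → Fin n → ℝ, Measurable x ∧
    (∀ t ∈ Set.Icc (0:ℝ) T, x t ∈ stdSimplex ℝ (Fin n)) ∧ r = Rcont η A h0 T x}

/-- The MWU learner's mixed strategy at round `t` (learner matrix `−A`). -/
noncomputable def discPlay {n m : ℕ} (η : ℝ) (A : Matrix (Fin n) (Fin m) ℝ)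
    (h0 : Fin m → ℝ) (x : ℕ → Fin n → ℝ) (t : ℕ) (i : Fin m) : ℝ :=
  Real.exp (η * (h0 i - ∑ s ∈ Finset.range t, ∑ k, x s k * A k i)) /
    ∑ j, Real.exp (η * (h0 j - ∑ s ∈ Finset.range t, ∑ k, x s k * A k j))

/-- The optimizer's discrete-time reward over `T` rounds against the MWU learner. -/
noncomputable def Rdisc {n m : ℕ} (η : ℝ) (A : Matrix (Fin n) (Fin m) ℝ)
    (h0 : Fin m → ℝ) (T : ℕ) (x : ℕ → Fin n → ℝ) : ℝ :=
  ∑ t ∈ Finset.range T, ∑ k, ∑ i, x t k * A k i * discPlay η A h0 x t i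

/-- The optimal discrete-time reward. -/
noncomputable def RdiscStar {n m : ℕ} (η : ℝ) (A : Matrix (Fin n) (Fin m) ℝ)
    (h0 : Fin m → ℝ) (T : ℕ) : ℝ :=
  sSup {r | ∃ x : ℕ → Fin n → ℝ, (∀ t, x t ∈ stdSimplex ℝ (Fin n)) ∧
    r = Rdisc η A h0 T x}

/-- The matching-pennies optimizer utility matrix. -/
noncomputable def MP : Matrix (Fin 2) (Fin 2) ℝ := !![1, -1; -1, 1]




lemma tanh_continuous : Continuous Real.tanh := by
  have : Real.tanh = fun x => Real.sinh x / Real.cosh x := funext Real.tanh_eq_sinh_div_cosh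
  rw [this]
  exact Real.continuous_sinh.div Real.continuous_cosh (fun x => (Real.cosh_pos x).ne')

lemma tanh_hasDerivAt (x : ℝ) : HasDerivAt Real.tanh (1 / Real.cosh x ^ 2) x := by
  have h := (Real.hasDerivAt_sinh x).div (Real.hasDerivAt_cosh x) (Real.cosh_pos x).ne'
  have ht : Real.tanh = fun x => Real.sinh x / Real.cosh x := funext Real.tanh_eq_sinh_div_cosh
  rw [ht]
  refine h.congr_deriv ?_
  rw [← Real.cosh_sq_sub_sinh_sq x]; ring

lemma tanh_lip (p q : ℝ) : |Real.tanh p - Real.tanh q| ≤ |p - q| := by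
  have h := Convex.norm_image_sub_le_of_norm_hasDerivWithin_le
    (f := Real.tanh) (f' := fun x => 1 / Real.cosh x ^ 2) (s := Set.univ) (C := 1)
    (fun x _ => (tanh_hasDerivAt x).hasDerivWithinAt)
    (fun x _ => by
      rw [Real.norm_eq_abs, abs_of_nonneg (by positivity), div_le_one (by positivity)]
      nlinarith [Real.one_le_cosh x])
    convex_univ (Set.mem_univ q) (Set.mem_univ p)
  simpa [Real.norm_eq_abs] using h

section core
variable (η : ℝ)

/-- the potential -/
noncomputable def phi (v : ℝ) : ℝ := Real.log (Real.cosh (η * v)) / η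

lemma phi_hasDerivAt (hη : 0 < η) (v : ℝ) : HasDerivAt (phi η) (Real.tanh (η * v)) v := by
  have h1 : HasDerivAt (fun w : ℝ => η * w) η v := by
    simpa using (hasDerivAt_id v).const_mul η
  have h2 : HasDerivAt (fun w : ℝ => Real.cosh (η * w)) (Real.sinh (η * v) * η) v :=
    (Real.hasDerivAt_cosh (η * v)).comp v h1
  have h3 : HasDerivAt (fun w : ℝ => Real.log (Real.cosh (η * w)))
      (Real.sinh (η * v) * η / Real.cosh (η * v)) v :=
    h2.log (Real.cosh_pos _).ne'
  have h4 := h3.div_const η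
  refine h4.congr_deriv ?_
  rw [Real.tanh_eq_sinh_div_cosh]
  field_simp

lemma phi_nonneg (hη : 0 < η) (v : ℝ) : 0 ≤ phi η v := by
  unfold phi
  apply div_nonneg _ hη.le
  exact Real.log_nonneg (Real.one_le_cosh _)

lemma phi_zero : phi η 0 = 0 := by simp [phi]

lemma phi_tangent (hη : 0 < η) (b c : ℝ) :
    phi η b - phi η c - η * (b - c)^2 ≤ Real.tanh (η * c) * (b - c) := by
  have hcont : Continuous fun v : ℝ => Real.tanh (η * v) :=
    tanh_continuous.comp (continuous_const.mul continuous_id)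
  have hftc : ∫ v in c..b, Real.tanh (η * v) = phi η b - phi η c :=
    integral_eq_sub_of_hasDerivAt (fun v _ => phi_hasDerivAt η hη v)
      (hcont.intervalIntegrable c b)
  have hconst : ∫ v in c..b, Real.tanh (η * c) = (b - c) * Real.tanh (η * c) := by
    simp [intervalIntegral.integral_const, smul_eq_mul]
  have hdiff : phi η b - phi η c - Real.tanh (η * c) * (b - c)
      = ∫ v in c..b, (Real.tanh (η * v) - Real.tanh (η * c)) := by
    rw [intervalIntegral.integral_sub (hcont.intervalIntegrable c b)
      (intervalIntegrable_const), hftc, hconst]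
    ring
  have hbound : |∫ v in c..b, (Real.tanh (η * v) - Real.tanh (η * c))| ≤
      (η * |b - c|) * |b - c| := by
    rw [← Real.norm_eq_abs]
    apply intervalIntegral.norm_integral_le_of_norm_le_const
    intro v hv
    rw [Real.norm_eq_abs]
    have h1 : |Real.tanh (η * v) - Real.tanh (η * c)| ≤ |η * v - η * c| := tanh_lip _ _
    have h2 : |η * v - η * c| = η * |v - c| := by
      rw [← mul_sub, abs_mul, abs_of_pos hη]
    have h3 : |v - c| ≤ |b - c| := by
      rcases le_total c b with hcb | hcb
      · rw [Set.uIoc_of_le hcb] at hv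
        rw [abs_of_nonneg (by linarith [hv.1.le]), abs_of_nonneg (by linarith)]
        linarith [hv.2]
      · rw [Set.uIoc_of_ge hcb] at hv
        rw [abs_of_nonpos (by linarith [hv.2]), abs_of_nonpos (by linarith)]
        linarith [hv.1]
    calc |Real.tanh (η * v) - Real.tanh (η * c)| ≤ η * |v - c| := h2 ▸ h1
      _ ≤ η * |b - c| := by nlinarith [abs_nonneg (v - c)]
  have h5 : (η * |b - c|) * |b - c| = η * (b - c)^2 := by
    rw [mul_assoc, ← abs_mul, ← pow_two, abs_of_nonneg (sq_nonneg _)]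
  nlinarith [abs_le.mp (h5 ▸ hbound) , hdiff]

lemma core (hη : 0 < η) (T : ℝ) (hT : 0 ≤ T) (u : ℝ → ℝ)
    (hu : Measurable u) (hub : ∀ t ∈ Set.Icc (0:ℝ) T, |u t| ≤ 1) :
    0 ≤ ∫ t in (0:ℝ)..T, u t * Real.tanh (η * ∫ s in (0:ℝ)..t, u s) := by
  set a : ℝ → ℝ := fun t => ∫ s in (0:ℝ)..t, u s with ha
  have hsub : ∀ s t : ℝ, s ∈ Set.Icc (0:ℝ) T → t ∈ Set.Icc (0:ℝ) T →
      Set.uIoc s t ⊆ Set.Icc (0:ℝ) T := by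
    intro s t hs ht v hv
    rcases Set.mem_uIoc.mp hv with h | h
    · exact ⟨le_trans hs.1 h.1.le, le_trans h.2 ht.2⟩
    · exact ⟨le_trans ht.1 h.1.le, le_trans h.2 hs.2⟩
  have huint : ∀ s t : ℝ, s ∈ Set.Icc (0:ℝ) T → t ∈ Set.Icc (0:ℝ) T →
      IntervalIntegrable u volume s t := by
    intro s t hs ht
    rw [intervalIntegrable_iff]
    apply Measure.integrableOn_of_bounded (M := 1)
    · exact ((measure_mono (hsub s t hs ht)).trans_lt (by simp)).ne
    · exact hu.aestronglyMeasurable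
    · exact ae_restrict_of_forall_mem measurableSet_uIoc
        (fun v hv => by rw [Real.norm_eq_abs]; exact hub v (hsub s t hs ht hv))
  have hacont : ContinuousOn a (Set.Icc 0 T) := by
    have := intervalIntegral.continuousOn_primitive_interval'
      (huint 0 T ⟨le_refl 0, hT⟩ ⟨hT, le_refl T⟩) (by rw [Set.uIcc_of_le hT]; exact ⟨le_refl 0, hT⟩)
    rwa [Set.uIcc_of_le hT] at this
  have hadd : ∀ s t : ℝ, s ∈ Set.Icc (0:ℝ) T → t ∈ Set.Icc (0:ℝ) T →
      a t - a s = ∫ r in s..t, u r := by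
    intro s t hs ht
    have := integral_add_adjacent_intervals (huint 0 s ⟨le_refl 0, hT⟩ hs)
      (huint s t hs ht)
    simp only [ha]
    linarith [this]
  have halip : ∀ s t : ℝ, s ∈ Set.Icc (0:ℝ) T → t ∈ Set.Icc (0:ℝ) T →
      |a t - a s| ≤ |t - s| := by
    intro s t hs ht
    rw [hadd s t hs ht, ← Real.norm_eq_abs]
    have h := intervalIntegral.norm_integral_le_of_norm_le_const (C := 1) (f := u)
      (a := s) (b := t)
      (fun v hv => by rw [Real.norm_eq_abs]; exact hub v (hsub s t hs ht hv))
    linarith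
  set f : ℝ → ℝ := fun t => u t * Real.tanh (η * a t) with hf
  have hfint : ∀ s t : ℝ, s ∈ Set.Icc (0:ℝ) T → t ∈ Set.Icc (0:ℝ) T →
      IntervalIntegrable f volume s t := by
    intro s t hs ht
    apply (huint s t hs ht).mul_continuousOn
    apply ContinuousOn.comp (tanh_continuous.comp (continuous_const.mul continuous_id)).continuousOn
      (hacont.mono _) (Set.mapsTo_univ _ _)
    · rw [← Set.uIcc_of_le hT]
      exact Set.uIcc_subset_uIcc (by rw [Set.uIcc_of_le hT]; exact hs)
        (by rw [Set.uIcc_of_le hT]; exact ht)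
  have hstep : ∀ s t : ℝ, s ∈ Set.Icc (0:ℝ) T → t ∈ Set.Icc (0:ℝ) T → s ≤ t →
      phi η (a t) - phi η (a s) - 2 * η * (t - s)^2 ≤ ∫ r in s..t, f r := by
    intro s t hs ht hst
    have hconst : ∫ r in s..t, u r * Real.tanh (η * a s)
        = (a t - a s) * Real.tanh (η * a s) := by
      rw [intervalIntegral.integral_mul_const, ← hadd s t hs ht]
    have huc : IntervalIntegrable (fun r => u r * Real.tanh (η * a s)) volume s t :=
      (huint s t hs ht).mul_const _
    have hsplit : (∫ r in s..t, f r) - ∫ r in s..t, u r * Real.tanh (η * a s)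
        = ∫ r in s..t, (u r * (Real.tanh (η * a r) - Real.tanh (η * a s))) := by
      rw [← intervalIntegral.integral_sub (hfint s t hs ht) huc]
      congr 1; funext r; simp only [hf]; ring
    have hb2 : |∫ r in s..t, (u r * (Real.tanh (η * a r) - Real.tanh (η * a s)))|
        ≤ (η * (t - s)) * |t - s| := by
      rw [← Real.norm_eq_abs]
      apply intervalIntegral.norm_integral_le_of_norm_le_const
      intro r hr
      rw [Set.uIoc_of_le hst] at hr
      have hrmem : r ∈ Set.Icc (0:ℝ) T := ⟨le_trans hs.1 hr.1.le, le_trans hr.2 ht.2⟩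
      rw [Real.norm_eq_abs, abs_mul]
      have h1 : |u r| ≤ 1 := hub r hrmem
      have h2 : |Real.tanh (η * a r) - Real.tanh (η * a s)| ≤ η * |a r - a s| := by
        have := tanh_lip (η * a r) (η * a s)
        rwa [← mul_sub, abs_mul, abs_of_pos hη] at this
      have h3 : |a r - a s| ≤ |r - s| := halip s r hs hrmem
      have h4 : |r - s| ≤ t - s := by
        rw [abs_of_nonneg (by linarith [hr.1.le])]; linarith [hr.2]
      have h5 : |Real.tanh (η * a r) - Real.tanh (η * a s)| ≤ η * (t - s) := by
        calc _ ≤ η * |a r - a s| := h2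
          _ ≤ η * (t - s) := by nlinarith [abs_nonneg (a r - a s)]
      calc |u r| * |Real.tanh (η * a r) - Real.tanh (η * a s)|
          ≤ 1 * (η * (t - s)) := by
            apply mul_le_mul h1 h5 (abs_nonneg _) (by norm_num)
        _ = η * (t - s) := one_mul _
    -- combine
    have htan := phi_tangent η hη (a t) (a s)
    have hsq : (a t - a s)^2 ≤ (t - s)^2 := by
      have := halip s t hs ht
      have h1 : |a t - a s| ≤ t - s := by
        rwa [abs_of_nonneg (show (0:ℝ) ≤ t - s by linarith)] at this
      nlinarith [abs_nonneg (a t - a s), sq_abs (a t - a s), abs_le.mp h1]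
    have hb2' := (abs_le.mp hb2).1
    have h6 : |t - s| = t - s := abs_of_nonneg (by linarith)
    rw [h6] at hb2'
    have h7 : (a t - a s) * Real.tanh (η * a s)
        ≥ phi η (a t) - phi η (a s) - η * (t - s)^2 := by nlinarith
    nlinarith [hconst, hsplit]
  have hpart : ∀ N : ℕ, 1 ≤ N → -(2 * η * T^2) / N ≤ ∫ t in (0:ℝ)..T, f t := by
    intro N hN
    have hNpos : (0:ℝ) < N := by exact_mod_cast hN
    have hNe : (N:ℝ) ≠ 0 := hNpos.ne'
    set pts : ℕ → ℝ := fun k => k * T / N with hpts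
    have hmem : ∀ k : ℕ, k ≤ N → pts k ∈ Set.Icc (0:ℝ) T := by
      intro k hk
      constructor
      · positivity
      · rw [div_le_iff₀ hNpos]
        have hkN : (k:ℝ) ≤ N := by exact_mod_cast hk
        nlinarith
    have hstep2 : ∀ k : ℕ, pts (k+1) - pts k = T / N := by
      intro k; simp only [hpts]; push_cast; field_simp; ring
    have hle : ∀ k : ℕ, pts k ≤ pts (k+1) := by
      intro k
      have h1 := hstep2 k
      have h2 : 0 ≤ T / N := by positivity
      linarith
    have hsum := intervalIntegral.sum_integral_adjacent_intervals (f := f) (μ := volume)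
      (a := pts) (n := N) (fun k hk => hfint (pts k) (pts (k+1)) (hmem k hk.le) (hmem (k+1) hk))
    have hpts0 : pts 0 = 0 := by simp [hpts]
    have hptsN : pts N = T := by simp only [hpts]; field_simp
    rw [hpts0, hptsN] at hsum
    have hlb : ∀ k ∈ Finset.range N,
        phi η (a (pts (k+1))) - phi η (a (pts k)) - 2 * η * (T/N)^2
          ≤ ∫ r in pts k..pts (k+1), f r := by
      intro k hk
      rw [Finset.mem_range] at hk
      have h := hstep (pts k) (pts (k+1)) (hmem k hk.le) (hmem (k+1) hk) (hle k)
      rwa [hstep2 k] at h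
    have hsumlb := Finset.sum_le_sum hlb
    rw [hsum] at hsumlb
    have htel : ∑ k ∈ Finset.range N,
        (phi η (a (pts (k+1))) - phi η (a (pts k)) - 2 * η * (T/N)^2)
        = phi η (a (pts N)) - phi η (a (pts 0)) - N * (2 * η * (T/N)^2) := by
      rw [Finset.sum_sub_distrib, Finset.sum_range_sub (fun k => phi η (a (pts k)))]
      rw [Finset.sum_const, Finset.card_range, nsmul_eq_mul]
    rw [htel] at hsumlb
    have ha0 : a (pts 0) = 0 := by rw [hpts0]; simp [ha]
    have hphi0 : phi η (a (pts 0)) = 0 := by rw [ha0, phi_zero]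
    have hphiT : 0 ≤ phi η (a (pts N)) := phi_nonneg η hη _
    have heq : (N:ℝ) * (2 * η * (T/N)^2) = 2 * η * T^2 / N := by
      field_simp
    rw [hphi0, heq] at hsumlb
    have : -(2 * η * T ^ 2) / N ≤ phi η (a (pts N)) - 0 - 2 * η * T ^ 2 / N := by
      rw [neg_div]; linarith
    linarith
  have hlim : Filter.Tendsto (fun N : ℕ => -(2 * η * T^2) / N) Filter.atTop (nhds 0) :=
    tendsto_const_div_atTop_nhds_zero_nat _
  exact le_of_tendsto hlim (Filter.eventually_atTop.mpr ⟨1, fun N hN => hpart N hN⟩)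
end core


noncomputable def xalt : ℕ → Fin 2 → ℝ := fun t i => if (i : ℕ) = t % 2 then 1 else 0

lemma xalt_simplex (t : ℕ) : xalt t ∈ stdSimplex ℝ (Fin 2) := by
  constructor
  · intro i; unfold xalt; split <;> norm_num
  · rw [Fin.sum_univ_two]
    rcases Nat.even_or_odd t with h | h
    · rw [Nat.even_iff] at h; norm_num [xalt, h]
    · rw [Nat.odd_iff] at h; norm_num [xalt, h]

lemma cum_xalt (t : ℕ) (i : Fin 2) :
    (∑ s ∈ Finset.range t, ∑ k, xalt s k * MP k i) =
      if Even t then 0 else MP 0 i := by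
  induction t with
  | zero => simp
  | succ t ih =>
    rw [Finset.sum_range_succ, ih]
    rcases Nat.even_or_odd t with h | h
    · have h2 : ¬ Even (t+1) := by rw [Nat.even_add_one]; simpa using h
      have hm : t % 2 = 0 := Nat.even_iff.mp h
      rw [if_pos h, if_neg h2, Fin.sum_univ_two]
      norm_num [xalt, hm]
    · have h2 : Even (t+1) := by rw [Nat.even_add_one]; simpa using h
      have hm : t % 2 = 1 := Nat.odd_iff.mp h
      rw [if_neg (by simpa [Nat.even_iff] using hm), if_pos h2, Fin.sum_univ_two]
      norm_num [xalt, hm]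
      fin_cases i <;> norm_num [MP]

lemma alt_sum (c : ℝ) (m : ℕ) :
    ∑ t ∈ Finset.range (2*m), (if Even t then (0:ℝ) else c) = m * c := by
  induction m with
  | zero => simp
  | succ m ih =>
    have h : 2 * (m+1) = (2*m) + 1 + 1 := by ring
    rw [h, Finset.sum_range_succ, Finset.sum_range_succ, ih]
    have h1 : Even (2*m) := ⟨m, by ring⟩
    have h2 : ¬ Even (2*m+1) := by rw [Nat.even_add_one]; simpa using h1
    rw [if_pos h1, if_neg h2]
    push_cast; ring

lemma Rdisc_xalt (η : ℝ) (T : ℕ) (hT : Even T) :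
    Rdisc η MP (fun _ => 0) T xalt = (T : ℝ) / 2 * Real.tanh η := by
  have hterm : ∀ t, (∑ k, ∑ i, xalt t k * MP k i * discPlay η MP (fun _ => 0) xalt t i)
      = if Even t then 0 else Real.tanh η := by
    intro t
    have hy : ∀ i, discPlay η MP (fun _ => 0) xalt t i =
        Real.exp (η * (0 - (if Even t then 0 else MP 0 i))) /
          ∑ j, Real.exp (η * (0 - (if Even t then 0 else MP 0 j))) := by
      intro i; simp only [discPlay, cum_xalt]
    rcases Nat.even_or_odd t with h | h
    · have hm : t % 2 = 0 := Nat.even_iff.mp h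
      have hyy : ∀ i, discPlay η MP (fun _ => 0) xalt t i = 1/2 := by
        intro i; rw [hy i, if_pos h, Fin.sum_univ_two, if_pos h, if_pos h]
        norm_num
      simp only [hyy]
      rw [if_pos h, Fin.sum_univ_two, Fin.sum_univ_two]
      norm_num [xalt, hm, MP]
    · have hm : t % 2 = 1 := Nat.odd_iff.mp h
      have hne : ¬ Even t := by simpa [Nat.even_iff] using hm
      have hy0 : discPlay η MP (fun _ => 0) xalt t 0 =
          Real.exp (-η) / (Real.exp (-η) + Real.exp η) := by
        rw [hy 0, if_neg hne, Fin.sum_univ_two, if_neg hne, if_neg hne]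
        norm_num [MP]
      have hy1 : discPlay η MP (fun _ => 0) xalt t 1 =
          Real.exp η / (Real.exp (-η) + Real.exp η) := by
        rw [hy 1, if_neg hne, Fin.sum_univ_two, if_neg hne, if_neg hne]
        norm_num [MP]
      rw [if_neg hne]
      have hxx : ∀ k : Fin 2, xalt t k = if k = 1 then 1 else 0 := by
        intro k; fin_cases k <;> simp [xalt, hm]
      rw [Fin.sum_univ_two]
      simp only [Fin.sum_univ_two, hxx, hy0, hy1]
      have hd : (0:ℝ) < Real.exp (-η) + Real.exp η := by positivity
      rw [Real.tanh_eq_sinh_div_cosh, Real.sinh_eq, Real.cosh_eq]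
      norm_num [MP]
      field_simp
      ring
  rw [Rdisc]
  simp only [hterm]
  obtain ⟨m, hm⟩ := hT
  have hm2 : T = 2 * m := by omega
  rw [hm2, alt_sum]
  push_cast; ring

lemma Rdisc_le (η : ℝ) (T : ℕ) (x : ℕ → Fin 2 → ℝ) (hx : ∀ t, x t ∈ stdSimplex ℝ (Fin 2)) :
    Rdisc η MP (fun _ => 0) T x ≤ (T : ℝ) := by
  rw [Rdisc]
  calc ∑ t ∈ Finset.range T, ∑ k, ∑ i, x t k * MP k i * discPlay η MP (fun _ => 0) x t i
      ≤ ∑ t ∈ Finset.range T, (1:ℝ) := by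
        apply Finset.sum_le_sum
        intro t _
        set y := discPlay η MP (fun _ => 0) x t with hy
        have hypos : ∀ i, 0 < y i := by
          intro i
          apply div_pos (Real.exp_pos _)
          rw [Fin.sum_univ_two]; positivity
        have hysum : y 0 + y 1 = 1 := by
          rw [hy]
          unfold discPlay
          rw [Fin.sum_univ_two, ← add_div, div_self (by positivity)]
        have hxy : (∑ k, ∑ i, x t k * MP k i * y i) = (x t 0 - x t 1) * (y 0 - y 1) := by
          rw [Fin.sum_univ_two, Fin.sum_univ_two, Fin.sum_univ_two]
          norm_num [MP]; ring
        rw [hxy]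
        have hx0 := (hx t).1 0
        have hx1 := (hx t).1 1
        have hxs : x t 0 + x t 1 = 1 := by
          have := (hx t).2; rwa [Fin.sum_univ_two] at this
        have h1 : |x t 0 - x t 1| ≤ 1 := by rw [abs_le]; constructor <;> nlinarith
        have h2 : |y 0 - y 1| ≤ 1 := by
          have := hypos 0; have := hypos 1
          rw [abs_le]; constructor <;> nlinarith
        calc (x t 0 - x t 1) * (y 0 - y 1) ≤ |(x t 0 - x t 1) * (y 0 - y 1)| := le_abs_self _
          _ ≤ 1 := by rw [abs_mul]; exact mul_le_one₀ h1 (abs_nonneg _) h2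
    _ = (T:ℝ) := by simp

lemma RdiscStar_ge (η : ℝ) (T : ℕ) (hT : Even T) :
    (T : ℝ) / 2 * Real.tanh η ≤
      sSup {r | ∃ x : ℕ → Fin 2 → ℝ, (∀ t, x t ∈ stdSimplex ℝ (Fin 2)) ∧
        r = Rdisc η MP (fun _ => 0) T x} := by
  apply le_csSup
  · exact ⟨(T:ℝ), fun r ⟨x, hx, hr⟩ => hr ▸ Rdisc_le η T x hx⟩
  · exact ⟨xalt, xalt_simplex, (Rdisc_xalt η T hT).symm⟩



lemma tanh_form (z : ℝ) :
    Real.exp (-z) / (Real.exp (-z) + Real.exp z) -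
      Real.exp z / (Real.exp (-z) + Real.exp z) = -Real.tanh z := by
  have hd : (0:ℝ) < Real.exp (-z) + Real.exp z := by positivity
  rw [Real.tanh_eq_sinh_div_cosh, Real.sinh_eq, Real.cosh_eq, div_sub_div_same, ← neg_div,
    div_eq_div_iff hd.ne' (by positivity : ((Real.exp z + Real.exp (-z)) / 2 : ℝ) ≠ 0)]
  ring

lemma Rcont_nonpos (η : ℝ) (hη : 0 < η) (T : ℝ) (hT : 0 ≤ T)
    (x : ℝ → Fin 2 → ℝ) (hxm : Measurable x)
    (hxs : ∀ t ∈ Set.Icc (0:ℝ) T, x t ∈ stdSimplex ℝ (Fin 2)) :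
    Rcont η MP (fun _ => 0) T x ≤ 0 := by
  set u : ℝ → ℝ := fun t => x t 0 - x t 1 with hu
  have hum : Measurable u :=
    ((measurable_pi_apply 0).comp hxm).sub ((measurable_pi_apply 1).comp hxm)
  have hub : ∀ t ∈ Set.Icc (0:ℝ) T, |u t| ≤ 1 := by
    intro t ht
    have h0 := (hxs t ht).1 0
    have h1 := (hxs t ht).1 1
    have hs := (hxs t ht).2
    rw [Fin.sum_univ_two] at hs
    rw [abs_le]
    constructor <;> simp only [hu] <;> nlinarith
  have hcomp : ∀ k : Fin 2, ∀ t ∈ Set.Icc (0:ℝ) T,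
      IntervalIntegrable (fun s => x s k) volume 0 t := by
    intro k t ht
    rw [intervalIntegrable_iff]
    apply MeasureTheory.Measure.integrableOn_of_bounded (M := 1)
    · have hss : Set.uIoc 0 t ⊆ Set.Icc 0 T := by
        rw [Set.uIoc_of_le ht.1]
        exact fun v hv => ⟨hv.1.le, hv.2.trans ht.2⟩
      exact ((measure_mono hss).trans_lt (by simp)).ne
    · exact ((measurable_pi_apply k).comp hxm).aestronglyMeasurable
    · apply ae_restrict_of_forall_mem measurableSet_uIoc
      intro v hv
      rw [Set.uIoc_of_le ht.1] at hv
      have hvmem : v ∈ Set.Icc (0:ℝ) T := ⟨hv.1.le, le_trans hv.2 ht.2⟩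
      have h0 := (hxs v hvmem).1 k
      have hsum := (hxs v hvmem).2
      rw [Fin.sum_univ_two] at hsum
      have h1 := (hxs v hvmem).1 0
      have h2 := (hxs v hvmem).1 1
      rw [Real.norm_eq_abs, abs_of_nonneg h0]
      fin_cases k <;> simp_all <;> linarith
  have hEq : Set.EqOn
      (fun t => ∑ k, ∑ i, x t k * MP k i * contPlay η MP (fun _ => 0) x t i)
      (fun t => -(u t * Real.tanh (η * ∫ s in (0:ℝ)..t, u s))) (Set.uIcc 0 T) := by
    intro t ht
    rw [Set.uIcc_of_le hT] at ht
    have hcum : cumX x t 0 - cumX x t 1 = ∫ s in (0:ℝ)..t, u s := by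
      simp only [hu]
      rw [intervalIntegral.integral_sub (hcomp 0 t ht) (hcomp 1 t ht)]
      rfl
    set A := ∫ s in (0:ℝ)..t, u s with hA
    have e0 : (cumX x t 0 * MP 0 0 + cumX x t 1 * MP 1 0) = A := by
      rw [← hcum]; norm_num [MP]
      ring
    have e1 : (cumX x t 0 * MP 0 1 + cumX x t 1 * MP 1 1) = -A := by
      rw [← hcum]; norm_num [MP]
      ring
    have hy0 : contPlay η MP (fun _ => 0) x t 0 =
        Real.exp (-(η*A)) / (Real.exp (-(η*A)) + Real.exp (η*A)) := by
      simp only [contPlay, Fin.sum_univ_two, e0, e1]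
      norm_num
    have hy1 : contPlay η MP (fun _ => 0) x t 1 =
        Real.exp (η*A) / (Real.exp (-(η*A)) + Real.exp (η*A)) := by
      simp only [contPlay, Fin.sum_univ_two, e0, e1]
      norm_num
    have htanh : contPlay η MP (fun _ => 0) x t 0 - contPlay η MP (fun _ => 0) x t 1
        = -Real.tanh (η * A) := by
      rw [hy0, hy1, tanh_form]
    simp only [Fin.sum_univ_two]
    have hm : MP 0 0 = 1 ∧ MP 0 1 = -1 ∧ MP 1 0 = -1 ∧ MP 1 1 = 1 := by
      norm_num [MP]
    obtain ⟨hm1, hm2, hm3, hm4⟩ := hm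
    rw [hm1, hm2, hm3, hm4]
    have hut : u t = x t 0 - x t 1 := rfl
    linear_combination (x t 0 - x t 1) * htanh
  rw [Rcont, intervalIntegral.integral_congr hEq, intervalIntegral.integral_neg]
  have := core η hη T hT u hum hub
  linarith

lemma RcontStar_nonpos (η : ℝ) (hη : 0 < η) (T : ℝ) (hT : 0 ≤ T) :
    RcontStar η MP (fun _ => 0) T ≤ 0 := by
  apply Real.sSup_le _ le_rfl
  rintro r ⟨x, hxm, hxs, rfl⟩
  exact Rcont_nonpos η hη T hT x hxm hxs

/-- in matching pennies, for every `η > 0` and even `T`,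
`R*_disc(0,T) ≥ R*_cont(0,T) + (T/2)·tanh η`. -/
theorem stmt9 (η : ℝ) (hη : 0 < η) (T : ℕ) (hT : Even T) :
    RcontStar η MP (fun _ => 0) (T : ℝ) + (T : ℝ) / 2 * Real.tanh η ≤
      RdiscStar η MP (fun _ => 0) T := by
  have h1 := RcontStar_nonpos η hη (T : ℝ) (by positivity)
  have h2 := RdiscStar_ge η T hT
  rw [RdiscStar]
  linarith
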